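/- Summing over all degree sequences: for n ≥ 2, ∑_{δ_1+⋯+δ_n = n−1, δ_i ≥ 0} multinomial(n−2; δ_1 − 1, δ_2, …, δ_n) = n^{n−2}, recovering Cayley's formula for the number of labelled trees rooted at vertex 1 (equivalently, labelled trees on n vertices). -/

import Mathlib

open Finset

noncomputable section
open scoped Classical

/-- summing the degree-sequence tree counts over all degree
sequences recovers Cayley's formula: for `n ≥ 2`,
`∑_{δ_1+⋯+δ_n = n-1} multinomial(n-2; δ_1 - 1, δ_2, …, δ_n) = n^(n-2)`,
where a multinomial coefficient with a negative entry is `0` (here `z` is the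
first vertex, `z = 0` in `Fin n`). -/
theorem cayley_formula_sum (n : ℕ) (hn : 2 ≤ n) (z : Fin n) (hz : (z : ℕ) = 0) :
    ∑ δ ∈ Finset.Nat.antidiagonalTuple n (n - 1),
        (if δ z = 0 then 0
          else Nat.multinomial Finset.univ (Function.update δ z (δ z - 1)))
      = n ^ (n - 2) := by
  classical
  have key : (n : ℕ) ^ (n - 2)
      = ∑ k ∈ Finset.piAntidiag (univ : Finset (Fin n)) (n - 2),
          Nat.multinomial univ k := by
    have h := Finset.sum_pow_eq_sum_piAntidiag (univ : Finset (Fin n))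
      (fun _ => (1 : ℕ)) (n - 2)
    simpa using h
  rw [key]
  have hfil : (∑ δ ∈ Finset.Nat.antidiagonalTuple n (n - 1),
        (if δ z = 0 then 0
          else Nat.multinomial Finset.univ (Function.update δ z (δ z - 1))))
      = ∑ δ ∈ (Finset.Nat.antidiagonalTuple n (n - 1)).filter (fun δ => δ z ≠ 0),
          Nat.multinomial Finset.univ (Function.update δ z (δ z - 1)) := by
    rw [Finset.sum_filter]
    exact Finset.sum_congr rfl fun δ _ => (ite_not _ _ _).symm
  rw [hfil]
  refine Finset.sum_bij' (fun δ _ => Function.update δ z (δ z - 1))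
    (fun k _ => Function.update k z (k z + 1)) ?_ ?_ ?_ ?_ ?_
  · intro δ hδ
    simp only [Finset.mem_filter, Finset.Nat.mem_antidiagonalTuple] at hδ
    obtain ⟨hsum, hzpos⟩ := hδ
    rw [Finset.mem_piAntidiag]
    refine ⟨?_, fun i _ => Finset.mem_univ i⟩
    rw [Finset.sum_eq_add_sum_sdiff_singleton_of_mem (Finset.mem_univ z)] at hsum
    rw [Finset.sum_update_of_mem (Finset.mem_univ z)]
    clear hfil key
    omega
  · intro k hk
    rw [Finset.mem_piAntidiag] at hk
    obtain ⟨hsum, -⟩ := hk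
    simp only [Finset.mem_filter, Finset.Nat.mem_antidiagonalTuple]
    constructor
    · rw [Finset.sum_eq_add_sum_sdiff_singleton_of_mem (Finset.mem_univ z)] at hsum
      rw [Finset.sum_update_of_mem (Finset.mem_univ z)]
      clear hfil key
      omega
    · simp
  · intro δ hδ
    simp only [Finset.mem_filter] at hδ
    funext i
    by_cases hi : i = z
    · subst hi
      simp only [Function.update_self]
      clear hfil key
      omega
    · simp [Function.update_of_ne hi]
  · intro k hk
    funext i
    by_cases hi : i = z
    · subst hi
      simp
    · simp [Function.update_of_ne hi]
  · intro δ hδ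
    rfl
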